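/- Let f : H → G be a homomorphism of Hilbert algebras, I an implicative filter of G, and J an irreducible implicative filter of H such that f⁻¹(I) ⊆ J. Then there exists an irreducible implicative filter K of G such that I ⊆ K and f⁻¹(K) = J. -/

import Mathlib

/-- A Hilbert algebra `(H, →, 1)`. -/
structure HilbertAlgebra (H : Type*) where
  imp : H → H → H
  one : H
  ax1 : ∀ a b : H, imp a (imp b a) = one
  ax2 : ∀ a b c : H, imp (imp a (imp b c)) (imp (imp a b) (imp a c)) = one
  ax3 : ∀ a b : H, imp a b = one → imp b a = one → a = b

namespace HilbertAlgebra

variable {H : Type*} (hH : HilbertAlgebra H)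

/-- The natural order: `a ≤ b` iff `a → b = 1`. -/
def le (a b : H) : Prop := hH.imp a b = hH.one

/-- Implicative filter. -/
def IsImplicativeFilter (F : Set H) : Prop :=
  hH.one ∈ F ∧ ∀ a b : H, a ∈ F → hH.imp a b ∈ F → b ∈ F

/-- Irreducible implicative filter. -/
def IsIrreducible (F : Set H) : Prop :=
  hH.IsImplicativeFilter F ∧ F ≠ Set.univ ∧
    ∀ F₁ F₂ : Set H, hH.IsImplicativeFilter F₁ → hH.IsImplicativeFilter F₂ →
      F = F₁ ∩ F₂ → (F = F₁ ∨ F = F₂)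

/-- Order-ideal: nonempty, downward closed, up-directed (w.r.t. the natural order). -/
def IsOrderIdeal (I : Set H) : Prop :=
  I.Nonempty ∧ (∀ a b : H, b ∈ I → hH.le a b → a ∈ I) ∧
    ∀ a b : H, a ∈ I → b ∈ I → ∃ c ∈ I, hH.le a c ∧ hH.le b c

/-- `φ(a) = {P ∈ X(H) : a ∈ P}`. -/
def phi (a : H) : Set (Set H) := {P | hH.IsIrreducible P ∧ a ∈ P}

/-- An upset of `X(H)` (the poset of irreducible implicative filters, ordered by `⊆`). -/
def IsUpsetX (U : Set (Set H)) : Prop :=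
  (∀ P ∈ U, hH.IsIrreducible P) ∧
    ∀ P Q : Set H, P ∈ U → hH.IsIrreducible Q → P ⊆ Q → Q ∈ U

/-- The Heyting implication `U ⇒ V` on upsets of `X(H)`. -/
def impUps (U V : Set (Set H)) : Set (Set H) :=
  {P | hH.IsIrreducible P ∧ ∀ Q : Set H, hH.IsIrreducible Q → P ⊆ Q → Q ∈ U → Q ∈ V}

/-- `FC(H)`: finite nonempty intersections of sets of the form `φ(a)`. -/
def FC : Set (Set (Set H)) :=
  {U | ∃ l : List H, l ≠ [] ∧ U = ⋂ a ∈ l, hH.phi a}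

/-- `X*(H)`: implicative filters that are intersections of finitely many (at least one)
irreducible implicative filters. -/
def XStar : Set (Set H) :=
  {F | ∃ S : Set (Set H), S.Finite ∧ S.Nonempty ∧ (∀ P ∈ S, hH.IsIrreducible P) ∧ F = ⋂₀ S}

/-- `Φ(a) = {F ∈ X*(H) : a ∈ F}`. -/
def Phi (a : H) : Set (Set H) := {F | F ∈ hH.XStar ∧ a ∈ F}

/-- An upset of `X*(H)` (ordered by `⊆`). -/
def IsUpsetXStar (U : Set (Set H)) : Prop :=
  (∀ F ∈ U, F ∈ hH.XStar) ∧
    ∀ F K : Set H, F ∈ U → K ∈ hH.XStar → F ⊆ K → K ∈ U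

/-- The implication `U ⇒ V` on upsets of `X*(H)`. -/
def impUpsStar (U V : Set (Set H)) : Set (Set H) :=
  {F | F ∈ hH.XStar ∧ ∀ K : Set H, K ∈ hH.XStar → F ⊆ K → K ∈ U → K ∈ V}

/-- Homomorphism of Hilbert algebras. -/
def IsHom {G : Type*} (hG : HilbertAlgebra G) (f : H → G) : Prop :=
  f hH.one = hG.one ∧ ∀ a b : H, f (hH.imp a b) = hG.imp (f a) (f b)

end HilbertAlgebra

/-- A Hilbert algebra with supremum: `(H, ∨)` is a join-semilattice whose induced
order has greatest element `1`, and `a → b = 1` iff `a ∨ b = b`. -/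
structure HilbertSup (H : Type*) extends HilbertAlgebra H where
  sup : H → H → H
  sup_comm : ∀ a b : H, sup a b = sup b a
  sup_assoc : ∀ a b c : H, sup (sup a b) c = sup a (sup b c)
  sup_idem : ∀ a : H, sup a a = a
  sup_one : ∀ a : H, sup a one = one
  imp_eq_one_iff : ∀ a b : H, imp a b = one ↔ sup a b = b

/-- Morphism of Hilbert algebras with supremum. -/
def HilbertSup.IsHomSup {H G : Type*} (hH : HilbertSup H) (hG : HilbertSup G)
    (f : H → G) : Prop :=
  hH.toHilbertAlgebra.IsHom hG.toHilbertAlgebra f ∧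
    ∀ a b : H, f (hH.sup a b) = hG.sup (f a) (f b)

/-- An implicative semilattice: a meet-semilattice with greatest element and a binary
operation `him` such that `a ⊓ b ≤ c ↔ a ≤ him b c`. -/
class ImplicativeSemilattice (G : Type*) extends SemilatticeInf G, OrderTop G where
  him : G → G → G
  inf_le_iff_le_him : ∀ a b c : G, a ⊓ b ≤ c ↔ a ≤ him b c

-- auxiliary development, to be inserted before stmt_15
namespace HilbertAux

open HilbertAlgebra

variable {H : Type*} (hH : HilbertAlgebra H)

theorem one_mp {x : H} (h : hH.imp hH.one x = hH.one) : x = hH.one := by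
  have h1 : hH.imp x (hH.imp hH.one x) = hH.one := hH.ax1 x hH.one
  have h2 : hH.imp (hH.imp hH.one x) x = hH.one := by rw [h]; exact h
  exact (hH.ax3 x (hH.imp hH.one x) h1 h2).trans h

theorem imp_self (a : H) : hH.imp a a = hH.one := by
  have h2 := hH.ax2 a (hH.imp a a) a
  rw [hH.ax1 a (hH.imp a a), hH.ax1 a a] at h2
  exact one_mp hH (one_mp hH h2)

theorem imp_one (a : H) : hH.imp a hH.one = hH.one :=
  one_mp hH (hH.ax1 hH.one a)

/-- Filter modus ponens with a theorem (=1) premise. -/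
theorem filt_mp {F : Set H} (hF : hH.IsImplicativeFilter F) {a b : H}
    (ha : a ∈ F) (hab : hH.imp a b = hH.one) : b ∈ F :=
  hF.2 a b ha (hab ▸ hF.1)

/-- weakening inside a filter -/
theorem filt_weaken {F : Set H} (hF : hH.IsImplicativeFilter F) {x : H} (p : H)
    (hx : x ∈ F) : hH.imp p x ∈ F :=
  filt_mp hH hF hx (hH.ax1 x p)

/-- `{x | p → x ∈ F}` is a filter. -/
theorem filt_imp {F : Set H} (hF : hH.IsImplicativeFilter F) (p : H) :
    hH.IsImplicativeFilter {x | hH.imp p x ∈ F} := by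
  constructor
  · show hH.imp p hH.one ∈ F
    rw [imp_one]; exact hF.1
  · intro a b ha hab
    have hS : hH.imp (hH.imp p (hH.imp a b)) (hH.imp (hH.imp p a) (hH.imp p b)) ∈ F :=
      hH.ax2 p a b ▸ hF.1
    exact hF.2 _ _ ha (hF.2 _ _ hab hS)

theorem filt_fold {F : Set H} (hF : hH.IsImplicativeFilter F) {x : H}
    (hx : x ∈ F) : ∀ l : List H, l.foldr hH.imp x ∈ F
  | [] => hx
  | p :: l => filt_weaken hH hF p (filt_fold hF hx l)

/-- `{x | foldr imp x l ∈ F}` is a filter containing `F`. -/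
theorem filt_foldSet {F : Set H} (hF : hH.IsImplicativeFilter F) :
    ∀ l : List H, hH.IsImplicativeFilter {x | l.foldr hH.imp x ∈ F} ∧
      F ⊆ {x | l.foldr hH.imp x ∈ F}
  | [] => ⟨hF, fun _ h => h⟩
  | p :: l => by
    have ih := filt_foldSet (filt_imp hH hF p) l
    have hset : {x : H | (p :: l).foldr hH.imp x ∈ F}
        = {x | l.foldr hH.imp x ∈ {y | hH.imp p y ∈ F}} := rfl
    rw [hset]
    exact ⟨ih.1, fun x hx => ih.2 (filt_weaken hH hF p hx)⟩

/-- Generated filter. -/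
inductive Gen {H : Type*} (hH : HilbertAlgebra H) (X : Set H) : H → Prop
  | base {x : H} : x ∈ X → Gen hH X x
  | one : Gen hH X hH.one
  | mp {a b : H} : Gen hH X a → Gen hH X (hH.imp a b) → Gen hH X b

theorem gen_isFilter (X : Set H) : hH.IsImplicativeFilter {x | Gen hH X x} :=
  ⟨Gen.one, fun _ _ ha hab => Gen.mp ha hab⟩

theorem gen_subset (X : Set H) : X ⊆ {x | Gen hH X x} := fun _ h => Gen.base h

/-- Characterization of irreducible filters: the complement is directed mod J. -/
theorem irr_directed {J : Set H} (hJ : hH.IsIrreducible J) {a b : H}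
    (ha : a ∉ J) (hb : b ∉ J) :
    ∃ c, c ∉ J ∧ hH.imp a c ∈ J ∧ hH.imp b c ∈ J := by
  by_contra hcon
  push_neg at hcon
  set J₁ : Set H := {c | hH.imp a c ∈ J} with hJ₁
  set J₂ : Set H := {c | hH.imp b c ∈ J} with hJ₂
  have hJsub₁ : J ⊆ J₁ := fun c hc => filt_weaken hH hJ.1 a hc
  have hJsub₂ : J ⊆ J₂ := fun c hc => filt_weaken hH hJ.1 b hc
  have hJeq : J = J₁ ∩ J₂ := by
    apply Set.Subset.antisymm (Set.subset_inter hJsub₁ hJsub₂)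
    intro c hc
    by_contra hcJ
    exact hcon c hcJ hc.1 hc.2
  rcases hJ.2.2 J₁ J₂ (filt_imp hH hJ.1 a) (filt_imp hH hJ.1 b) hJeq with h | h
  · refine ha (h ▸ (show a ∈ J₁ from ?_))
    show hH.imp a a ∈ J
    rw [imp_self]; exact hJ.1.1
  · refine hb (h ▸ (show b ∈ J₂ from ?_))
    show hH.imp b b ∈ J
    rw [imp_self]; exact hJ.1.1

end HilbertAux


namespace HilbertAux

theorem fold_map_hom {H G : Type*} (hH : HilbertAlgebra H) (hG : HilbertAlgebra G)
    {f : H → G} (hf : hH.IsHom hG f) (c : H) :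
    ∀ l : List H, (l.map f).foldr hG.imp (f c) = f (l.foldr hH.imp c)
  | [] => rfl
  | j :: l => by
    simp only [List.map_cons, List.foldr_cons, fold_map_hom hH hG hf c l, (hf.2 _ _).symm]

theorem filt_fold_mp {H : Type*} (hH : HilbertAlgebra H) {J : Set H}
    (hJ : hH.IsImplicativeFilter J) {c : H} :
    ∀ l : List H, (∀ j ∈ l, j ∈ J) → l.foldr hH.imp c ∈ J → c ∈ J
  | [], _, h => h
  | j :: l, hl, h =>
    filt_fold_mp hH hJ l (fun x hx => hl x (List.mem_cons_of_mem j hx))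
      (hJ.2 _ _ (hl j List.mem_cons_self) h)

end HilbertAux

theorem stmt_15 {H G : Type*} (hH : HilbertAlgebra H) (hG : HilbertAlgebra G) (f : H → G)
    (hf : hH.IsHom hG f) (I : Set G) (hI : hG.IsImplicativeFilter I)
    (J : Set H) (hJ : hH.IsIrreducible J) (hIJ : f ⁻¹' I ⊆ J) :
    ∃ K : Set G, hG.IsIrreducible K ∧ I ⊆ K ∧ f ⁻¹' K = J := by
  classical
  obtain ⟨hJf, hJne, hJirr⟩ := hJ
  set X : Set G := I ∪ f '' J with hX
  set F₀ : Set G := {x | HilbertAux.Gen hG X x} with hF₀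
  have hF₀filt : hG.IsImplicativeFilter F₀ := HilbertAux.gen_isFilter hG X
  have hXF₀ : X ⊆ F₀ := HilbertAux.gen_subset hG X
  -- key invariant for the generated filter
  have key : ∀ x, HilbertAux.Gen hG X x →
      ∃ l : List H, (∀ j ∈ l, j ∈ J) ∧ (l.map f).foldr hG.imp x ∈ I := by
    intro x hx
    induction hx with
    | base hmem =>
        rcases hmem with hxI | ⟨j, hjJ, rfl⟩
        · exact ⟨[], by simp, hxI⟩
        · refine ⟨[j], by simp [hjJ], ?_⟩
          show hG.imp (f j) (f j) ∈ I
          rw [HilbertAux.imp_self]; exact hI.1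
    | one => exact ⟨[], by simp, hI.1⟩
    | @mp a b ha hab iha ihab =>
        obtain ⟨l₁, hl₁, hfold₁⟩ := iha
        obtain ⟨l₂, hl₂, hfold₂⟩ := ihab
        refine ⟨l₂ ++ l₁, ?_, ?_⟩
        · intro j hj
          rcases List.mem_append.1 hj with h | h
          exacts [hl₂ j h, hl₁ j h]
        · set m₁ := l₁.map f
          set m₂ := l₂.map f
          have hD := HilbertAux.filt_foldSet hG hI m₂
          -- D' := {y | m₂.foldr imp y ∈ I} is a filter containing (imp a b)
          have habD : m₁.foldr hG.imp (hG.imp a b) ∈ {y | m₂.foldr hG.imp y ∈ I} :=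
            HilbertAux.filt_fold hG hD.1 hfold₂ m₁
          have haD : m₂.foldr hG.imp (m₁.foldr hG.imp a) ∈ I :=
            HilbertAux.filt_fold hG hI hfold₁ m₂
          -- now use that {x | m₂.foldr (m₁.foldr x) ∈ I} is a filter
          have hDD := HilbertAux.filt_foldSet hG hD.1 m₁
          have hb : m₂.foldr hG.imp (m₁.foldr hG.imp b) ∈ I := by
            have := hDD.1.2 a b haD ?_
            · exact this
            · -- need m₁.foldr (imp a b) ∈ D'
              exact habD
          show ((l₂ ++ l₁).map f).foldr hG.imp b ∈ I
          rw [List.map_append, List.foldr_append]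
          exact hb
  -- disjointness
  have hdisj : ∀ c, c ∉ J → f c ∉ F₀ := by
    intro c hc hfc
    obtain ⟨l, hl, hfold⟩ := key _ hfc
    rw [HilbertAux.fold_map_hom hH hG hf c l] at hfold
    exact hc (HilbertAux.filt_fold_mp hH hJf l hl (hIJ hfold))
  -- Zorn
  set S : Set (Set G) :=
    {K | hG.IsImplicativeFilter K ∧ F₀ ⊆ K ∧ ∀ c, c ∉ J → f c ∉ K} with hS
  have hF₀S : F₀ ∈ S := ⟨hF₀filt, le_refl _, hdisj⟩
  have hzorn : ∀ c ⊆ S, IsChain (· ⊆ ·) c → c.Nonempty →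
      ∃ ub ∈ S, ∀ s ∈ c, s ⊆ ub := by
    intro c hcS hchain hcne
    refine ⟨⋃₀ c, ⟨⟨?_, ?_⟩, ?_, ?_⟩, fun s hs => Set.subset_sUnion_of_mem hs⟩
    · obtain ⟨s, hs⟩ := hcne
      exact ⟨s, hs, (hcS hs).1.1⟩
    · rintro a b ⟨s₁, hs₁, has₁⟩ ⟨s₂, hs₂, habs₂⟩
      rcases hchain.total hs₁ hs₂ with h | h
      · exact ⟨s₂, hs₂, (hcS hs₂).1.2 a b (h has₁) habs₂⟩
      · exact ⟨s₁, hs₁, (hcS hs₁).1.2 a b has₁ (h habs₂)⟩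
    · obtain ⟨s, hs⟩ := hcne
      exact (hcS hs).2.1.trans (Set.subset_sUnion_of_mem hs)
    · rintro a ha ⟨s, hs, hfas⟩
      exact (hcS hs).2.2 a ha hfas
  obtain ⟨m, hF₀m, hm⟩ := zorn_subset_nonempty S hzorn F₀ hF₀S
  obtain ⟨⟨hmfilt, hF₀m', hmdisj⟩, hmmax⟩ := hm
  -- m is irreducible
  have hmne : m ≠ Set.univ := by
    obtain ⟨c₀, hc₀⟩ := Set.ne_univ_iff_exists_notMem (s := J) |>.1 hJne
    intro h
    exact hmdisj c₀ hc₀ (h ▸ Set.mem_univ (f c₀))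
  have hfJm : f '' J ⊆ m := fun x hx =>
    hF₀m' (hXF₀ (Set.mem_union_right _ hx))
  refine ⟨m, ⟨hmfilt, hmne, ?_⟩, fun x hx => hF₀m' (hXF₀ (Set.mem_union_left _ hx)), ?_⟩
  · intro F₁ F₂ h1 h2 heq
    by_contra hcon
    push_neg at hcon
    obtain ⟨hne1, hne2⟩ := hcon
    have hsub1 : m ⊆ F₁ := heq ▸ Set.inter_subset_left
    have hsub2 : m ⊆ F₂ := heq ▸ Set.inter_subset_right
    have hnS1 : F₁ ∉ S := fun h =>
      hne1 (Set.Subset.antisymm hsub1 (hmmax h hsub1))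
    have hnS2 : F₂ ∉ S := fun h =>
      hne2 (Set.Subset.antisymm hsub2 (hmmax h hsub2))
    have hc1 : ∃ c₁, c₁ ∉ J ∧ f c₁ ∈ F₁ := by
      by_contra h
      push_neg at h
      exact hnS1 ⟨h1, hF₀m'.trans hsub1, h⟩
    have hc2 : ∃ c₂, c₂ ∉ J ∧ f c₂ ∈ F₂ := by
      by_contra h
      push_neg at h
      exact hnS2 ⟨h2, hF₀m'.trans hsub2, h⟩
    obtain ⟨c₁, hc₁J, hc₁F⟩ := hc1
    obtain ⟨c₂, hc₂J, hc₂F⟩ := hc2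
    obtain ⟨c, hcJ, hic1, hic2⟩ := HilbertAux.irr_directed hH ⟨hJf, hJne, hJirr⟩ hc₁J hc₂J
    have h₁ : f c ∈ F₁ := by
      have : hG.imp (f c₁) (f c) ∈ F₁ := by
        rw [← hf.2]
        exact hsub1 (hfJm ⟨_, hic1, rfl⟩)
      exact h1.2 _ _ hc₁F this
    have h₂ : f c ∈ F₂ := by
      have : hG.imp (f c₂) (f c) ∈ F₂ := by
        rw [← hf.2]
        exact hsub2 (hfJm ⟨_, hic2, rfl⟩)
      exact h2.2 _ _ hc₂F this
    exact hmdisj c hcJ (heq ▸ Set.mem_inter h₁ h₂)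
  · ext c
    constructor
    · intro hc
      by_contra hcJ
      exact hmdisj c hcJ hc
    · intro hc
      exact hfJm ⟨c, hc, rfl⟩
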